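/- Suppose |K| = q², α = α⁻¹ (i.e. α(x,y)² = 1 for all x,y ∈ G), and let C be a left ideal of R = K[G,Θ,α]. Then C is a Hermitian LCD code, i.e. R = C ⊕ C^{⊥_h}, if and only if there exists e ∈ R with e² = e, e equal to the adjoint of e^{(q)}, and C = Re. -/
import Mathlib

set_option linter.unusedSectionVars false

open Finset

variable {K : Type*} {G : Type*}

/-- Multiplication of the twisted skew group ring `K[G,Θ,α]`:
`(Σ_g a_g ḡ)·(Σ_h b_h h̄) = Σ_{g,h} a_g·Θ(g)(b_h)·α(g,h)·(gh)‾`. -/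
def tsMul [Field K] [Group G] [Fintype G] [DecidableEq G]
    (Θ : G →* RingAut K) (α : G → G → Kˣ) (a b : G → K) : G → K :=
  fun x => ∑ p : G × G, if p.1 * p.2 = x then a p.1 * Θ p.1 (b p.2) * (α p.1 p.2 : K) else 0

/-- The identity element `1̄` of the twisted skew group ring. -/
def tsOne [Field K] [Group G] [DecidableEq G] : (G → K) := fun x => if x = 1 then 1 else 0

/-- The adjoint map `a ↦ â = Σ_g Θ(g⁻¹)(a_g)·α(g,g⁻¹)·(g⁻¹)‾`. -/
def tsAdj [Field K] [Group G] (Θ : G →* RingAut K) (α : G → G → Kˣ) (a : G → K) : G → K :=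
  fun x => Θ x (a x⁻¹) * (α x⁻¹ x : K)

section Aux

variable [Field K] [Fintype K] [Group G] [Fintype G] [DecidableEq G]
variable (Θ : G →* RingAut K) (α : G → G → Kˣ) (q : ℕ)

/-- `σ(a)`, the adjoint of `a^{(q)}`. -/
def adjq (a : G → K) : G → K := tsAdj Θ α fun g => a g ^ q

/-- The Hermitian form. -/
def herm (a b : G → K) : K := ∑ g : G, a g * b g ^ q

lemma adjq_apply (a : G → K) (x : G) :
    adjq Θ α q a x = Θ x (a x⁻¹ ^ q) * (α x⁻¹ x : K) := rfl

lemma tsMul_apply (a b : G → K) (x : G) :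
    tsMul Θ α a b x = ∑ g : G, a g * Θ g (b (g⁻¹ * x)) * (α g (g⁻¹ * x) : K) := by
  rw [tsMul, Fintype.sum_prod_type]
  refine Finset.sum_congr rfl fun g _ => ?_
  rw [Fintype.sum_eq_single (g⁻¹ * x)]
  · simp
  · intro h hh
    rw [if_neg]
    intro hc
    exact hh (by rw [← hc]; group)

lemma tsMul_one (hnorm : ∀ g : G, α g 1 = 1 ∧ α 1 g = 1) (a : G → K) :
    tsMul Θ α a tsOne = a := by
  funext x
  rw [tsMul_apply]
  rw [Fintype.sum_eq_single x]
  · rw [inv_mul_cancel, show (tsOne : G → K) 1 = 1 from if_pos rfl, map_one, (hnorm x).1,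
      Units.val_one, mul_one, mul_one]
  · intro h hh
    rw [tsOne, if_neg (fun hc => hh (inv_mul_eq_one.mp hc)), map_zero]
    ring

lemma one_tsMul (hnorm : ∀ g : G, α g 1 = 1 ∧ α 1 g = 1) (a : G → K) :
    tsMul Θ α tsOne a = a := by
  funext x
  rw [tsMul_apply]
  rw [Fintype.sum_eq_single 1]
  · rw [inv_one, one_mul, show (tsOne : G → K) 1 = 1 from if_pos rfl, (hnorm x).2,
      Units.val_one, mul_one, one_mul, map_one]
    rfl
  · intro h hh
    simp [tsOne, hh]

lemma tsMul_add_right (a b c : G → K) :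
    tsMul Θ α a (b + c) = tsMul Θ α a b + tsMul Θ α a c := by
  funext x
  simp only [tsMul_apply, Pi.add_apply, map_add]
  rw [← Finset.sum_add_distrib]
  exact Finset.sum_congr rfl fun g _ => by ring

lemma tsMul_sub_left (a b c : G → K) :
    tsMul Θ α (a - b) c = tsMul Θ α a c - tsMul Θ α b c := by
  funext x
  simp only [tsMul_apply, Pi.sub_apply]
  rw [← Finset.sum_sub_distrib]
  exact Finset.sum_congr rfl fun g _ => by ring

lemma tsMul_assoc (hcoc : ∀ g₁ g₂ g₃ : G, α g₁ (g₂ * g₃) * α g₂ g₃ = α (g₁ * g₂) g₃ * α g₁ g₂)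
    (hstab : ∀ g x y : G, Θ g ((α x y : K)) = (α x y : K)) (a b c : G → K) :
    tsMul Θ α (tsMul Θ α a b) c = tsMul Θ α a (tsMul Θ α b c) := by
  funext x
  simp only [tsMul_apply]
  simp only [Finset.sum_mul, map_sum, Finset.mul_sum]
  rw [Finset.sum_comm]
  refine Finset.sum_congr rfl fun h _ => ?_
  rw [← Equiv.sum_comp (Equiv.mulLeft h) _]
  refine Finset.sum_congr rfl fun k _ => ?_
  have e1 : h⁻¹ * (h * k) = k := by group
  have e2 : (h * k)⁻¹ * x = k⁻¹ * (h⁻¹ * x) := by group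
  simp only [Equiv.coe_mulLeft, e1, e2]
  have hco : (α h (k * (k⁻¹ * (h⁻¹ * x))) : K) * α k (k⁻¹ * (h⁻¹ * x))
      = α (h * k) (k⁻¹ * (h⁻¹ * x)) * α h k := by
    have := hcoc h k (k⁻¹ * (h⁻¹ * x))
    exact_mod_cast congrArg (Units.val) this
  have e3 : k * (k⁻¹ * (h⁻¹ * x)) = h⁻¹ * x := by group
  rw [e3] at hco
  rw [map_mul (Θ h), map_mul (Θ h), hstab]
  have e4 : Θ h (Θ k (c (k⁻¹ * (h⁻¹ * x)))) = Θ (h * k) (c (k⁻¹ * (h⁻¹ * x))) := by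
    rw [map_mul]; rfl
  rw [e4]
  linear_combination (-(a h * Θ h (b k) * Θ (h*k) (c (k⁻¹ * (h⁻¹ * x))))) * hco

lemma alpha_sq (hα2 : ∀ x y : G, (α x y : K) ^ 2 = 1) (x y : G) :
    (α x y : K) * (α x y : K) = 1 := by rw [← sq]; exact hα2 x y

lemma alpha_inv_comm (hnorm : ∀ g : G, α g 1 = 1 ∧ α 1 g = 1)
    (hcoc : ∀ g₁ g₂ g₃ : G, α g₁ (g₂ * g₃) * α g₂ g₃ = α (g₁ * g₂) g₃ * α g₁ g₂) (x : G) :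
    α x⁻¹ x = α x x⁻¹ := by
  have := hcoc x x⁻¹ x
  rw [inv_mul_cancel, mul_inv_cancel, (hnorm x).1, (hnorm x).2, one_mul, one_mul] at this
  exact this

/-- Field facts coming from `|K| = q²`. -/
lemma field_facts (hq : Fintype.card K = q ^ 2) :
    (∃ φ : K →+* K, ∀ x : K, φ x = x ^ q) ∧ (∀ x : K, (x ^ q) ^ q = x) ∧ q ≠ 0 ∧
      (∀ A : K, A ^ 2 = 1 → A ^ q = A) := by
  have hq2 : ∀ x : K, (x ^ q) ^ q = x := by
    intro x
    rw [← pow_mul, ← sq, ← hq, FiniteField.pow_card]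
  have hq0 : q ≠ 0 := by
    rintro rfl
    rw [pow_succ, mul_zero] at hq
    exact absurd hq (Fintype.card_ne_zero)
  have hp : (ringChar K).Prime := CharP.char_is_prime K (ringChar K)
  obtain ⟨n, -, hcard⟩ := FiniteField.card K (ringChar K)
  have hqd : q ∣ (ringChar K) ^ (n : ℕ) := by
    rw [← hcard, hq]
    exact dvd_pow_self q two_ne_zero
  obtain ⟨k, -, hk⟩ := (Nat.dvd_prime_pow hp).mp hqd
  haveI : Fact (ringChar K).Prime := ⟨hp⟩
  refine ⟨⟨iterateFrobenius K (ringChar K) k, fun x => by rw [iterateFrobenius_def, ← hk]⟩,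
    hq2, hq0, ?_⟩
  intro A hA
  rcases Nat.even_or_odd q with he | ho
  · have h2p : (2 : ℕ) ∣ ringChar K ^ k := by rw [← hk]; exact he.two_dvd
    have hp2 : ringChar K = 2 := by
      have := Nat.Prime.dvd_of_dvd_pow (p := 2) Nat.prime_two h2p
      exact ((Nat.prime_dvd_prime_iff_eq Nat.prime_two hp).mp this).symm
    have h2z : (2 : K) = 0 := by
      have := CharP.cast_eq_zero K (ringChar K)
      rwa [hp2] at this
    have hA1 : A = 1 := by
      have hz : (A - 1) ^ 2 = 0 := by
        have h := hA
        have : (A - 1) ^ 2 = (A ^ 2 - 1) - 2 * (A - 1) := by ring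
        rw [this, hA, sub_self, h2z, zero_mul, zero_sub, neg_eq_zero]
      exact sub_eq_zero.mp (pow_eq_zero_iff (n := 2) two_ne_zero |>.mp hz)
    rw [hA1, one_pow]
  · obtain ⟨m, hm⟩ := ho
    rw [hm, pow_add, pow_mul, hA, one_pow, one_mul, pow_one]

lemma herm_adj
    (hnorm : ∀ g : G, α g 1 = 1 ∧ α 1 g = 1)
    (hcoc : ∀ g₁ g₂ g₃ : G, α g₁ (g₂ * g₃) * α g₂ g₃ = α (g₁ * g₂) g₃ * α g₁ g₂)
    (hstab : ∀ g x y : G, Θ g ((α x y : K)) = (α x y : K))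
    (hα2 : ∀ x y : G, (α x y : K) ^ 2 = 1)
    (φ : K →+* K) (hφ : ∀ x : K, φ x = x ^ q)
    (hq2 : ∀ x : K, (x ^ q) ^ q = x)
    (hαq : ∀ x y : G, (α x y : K) ^ q = α x y)
    (a b c : G → K) :
    herm q (tsMul Θ α a b) c = herm q a (tsMul Θ α c (adjq Θ α q b)) := by
  have alpha_key : ∀ g u : G, (α g u : K) = (α u u⁻¹ : K) * (α (g * u) u⁻¹ : K) := by
    intro g u
    have h := hcoc g u u⁻¹
    rw [mul_inv_cancel, (hnorm g).1, one_mul] at h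
    have h' : (α u u⁻¹ : K) = (α (g * u) u⁻¹ : K) * (α g u : K) :=
      congrArg Units.val h
    rw [h', mul_comm ((α (g*u) u⁻¹ : K)) ((α g u : K)), mul_assoc, ← sq, hα2, mul_one]
  unfold herm
  have expand : ∀ g : G, (tsMul Θ α c (adjq Θ α q b) g) ^ q
      = ∑ x : G, (c x)^q * ((Θ x (adjq Θ α q b (x⁻¹ * g)))^q * ((α x (x⁻¹*g) : K))^q) := by
    intro g
    rw [tsMul_apply, ← hφ, map_sum]
    refine Finset.sum_congr rfl fun x _ => ?_
    rw [map_mul, map_mul, hφ, hφ, hφ]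
    ring
  have rhs_eq : (∑ g : G, a g * tsMul Θ α c (adjq Θ α q b) g ^ q)
      = ∑ g : G, ∑ x : G,
          a g * ((c x)^q * ((Θ x (adjq Θ α q b (x⁻¹ * g)))^q * ((α x (x⁻¹*g) : K))^q)) := by
    refine Finset.sum_congr rfl fun g _ => ?_
    rw [expand, Finset.mul_sum]
  rw [rhs_eq]
  simp only [tsMul_apply, Finset.sum_mul]
  rw [Finset.sum_comm]
  refine Finset.sum_congr rfl fun g _ => Finset.sum_congr rfl fun x _ => ?_
  have e1 : (x⁻¹ * g)⁻¹ = g⁻¹ * x := by group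
  have e2 : x * (x⁻¹ * g) = g := by group
  have h1 : (Θ x (adjq Θ α q b (x⁻¹ * g)))^q
      = Θ g (b (g⁻¹ * x)) * (α (g⁻¹*x) (x⁻¹*g) : K) := by
    rw [adjq_apply, e1, map_mul, hstab]
    have hcomp : Θ x (Θ (x⁻¹ * g) (b (g⁻¹ * x) ^ q)) = Θ g (b (g⁻¹ * x) ^ q) := by
      have h := map_mul Θ x (x⁻¹ * g)
      rw [e2] at h
      exact (DFunLike.congr_fun h (b (g⁻¹ * x) ^ q)).symm
    rw [hcomp, map_pow, mul_pow, hq2, hαq]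
  rw [h1, hαq]
  have e3 : (g⁻¹ * x)⁻¹ = x⁻¹ * g := by group
  have e4 : g * (g⁻¹ * x) = x := by group
  have e5 : (α g (g⁻¹ * x) : K)
      = (α (g⁻¹*x) (x⁻¹*g) : K) * (α x (x⁻¹*g) : K) := by
    have := alpha_key g (g⁻¹ * x)
    rwa [e3, e4] at this
  rw [e5]
  ring

lemma adjq_invol
    (hnorm : ∀ g : G, α g 1 = 1 ∧ α 1 g = 1)
    (hcoc : ∀ g₁ g₂ g₃ : G, α g₁ (g₂ * g₃) * α g₂ g₃ = α (g₁ * g₂) g₃ * α g₁ g₂)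
    (hstab : ∀ g x y : G, Θ g ((α x y : K)) = (α x y : K))
    (hα2 : ∀ x y : G, (α x y : K) ^ 2 = 1)
    (hq2 : ∀ x : K, (x ^ q) ^ q = x)
    (hαq : ∀ x y : G, (α x y : K) ^ q = α x y)
    (a : G → K) : adjq Θ α q (adjq Θ α q a) = a := by
  funext x
  rw [adjq_apply]
  rw [show adjq Θ α q a x⁻¹ = Θ x⁻¹ ((a x)^q) * (α x x⁻¹ : K) by rw [adjq_apply, inv_inv]]
  rw [mul_pow, ← map_pow, hq2, hαq, map_mul, hstab]
  have hcomp : Θ x (Θ x⁻¹ (a x)) = a x := by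
    have h := map_mul Θ x x⁻¹
    rw [mul_inv_cancel, map_one] at h
    exact (DFunLike.congr_fun h (a x)).symm
  rw [hcomp, mul_assoc, alpha_inv_comm α hnorm hcoc, alpha_sq α hα2, mul_one]

lemma adjq_zero (hq0 : q ≠ 0) : adjq Θ α q (0 : G → K) = 0 := by
  funext x
  rw [adjq_apply, Pi.zero_apply, zero_pow hq0, map_zero, zero_mul]
  rfl

lemma adjq_one (hnorm : ∀ g : G, α g 1 = 1 ∧ α 1 g = 1) (hq0 : q ≠ 0) :
    adjq Θ α q (tsOne : G → K) = tsOne := by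
  funext x
  rw [adjq_apply]
  by_cases hx : x = 1
  · subst hx
    rw [inv_one, show (tsOne : G → K) 1 = 1 from if_pos rfl, one_pow, map_one, (hnorm 1).1,
      Units.val_one, mul_one]
  · rw [show (tsOne : G → K) x⁻¹ = 0 from if_neg (fun hc => hx (inv_eq_one.mp hc)),
      zero_pow hq0, map_zero, zero_mul]
    exact (if_neg hx).symm

lemma adjq_add (φ : K →+* K) (hφ : ∀ x : K, φ x = x ^ q) (a b : G → K) :
    adjq Θ α q (a + b) = adjq Θ α q a + adjq Θ α q b := by
  funext x
  rw [Pi.add_apply, adjq_apply, adjq_apply, adjq_apply, Pi.add_apply]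
  have : (a x⁻¹ + b x⁻¹) ^ q = a x⁻¹ ^ q + b x⁻¹ ^ q := by
    rw [← hφ, ← hφ, ← hφ, ← map_add]
  rw [this, map_add]
  ring

lemma herm_conj (φ : K →+* K) (hφ : ∀ x : K, φ x = x ^ q)
    (hq2 : ∀ x : K, (x ^ q) ^ q = x) (a b : G → K) :
    herm q a b = (herm q b a) ^ q := by
  rw [herm, herm, ← hφ, map_sum]
  refine Finset.sum_congr rfl fun g _ => ?_
  rw [map_mul, hφ, hφ, hq2]
  ring

lemma herm_sub_right (φ : K →+* K) (hφ : ∀ x : K, φ x = x ^ q) (a b c : G → K) :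
    herm q a (b - c) = herm q a b - herm q a c := by
  unfold herm
  rw [← Finset.sum_sub_distrib]
  refine Finset.sum_congr rfl fun g _ => ?_
  have : (b g - c g) ^ q = b g ^ q - c g ^ q := by
    rw [← hφ, ← hφ, ← hφ, ← map_sub]
  rw [Pi.sub_apply, this]
  ring

lemma herm_zero_right (hq0 : q ≠ 0) (a : G → K) : herm q a 0 = 0 := by
  unfold herm
  refine Finset.sum_eq_zero fun g _ => ?_
  rw [Pi.zero_apply, zero_pow hq0, mul_zero]

lemma herm_nondeg_right (hq0 : q ≠ 0) (y : G → K)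
    (h : ∀ r : G → K, herm q r y = 0) : y = 0 := by
  funext g
  have := h (fun h => if h = g then 1 else 0)
  rw [herm, Fintype.sum_eq_single g (fun h hh => by rw [if_neg hh, zero_mul]),
    if_pos rfl, one_mul] at this
  exact pow_eq_zero_iff hq0 |>.mp this

lemma herm_nondeg_left (hq0 : q ≠ 0) (y : G → K)
    (h : ∀ r : G → K, herm q y r = 0) : y = 0 := by
  funext g
  have := h (fun h => if h = g then 1 else 0)
  rw [herm, Fintype.sum_eq_single g
    (fun h hh => by rw [if_neg hh, zero_pow hq0, mul_zero]),
    if_pos rfl, one_pow, mul_one] at this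
  exact this

lemma adjq_antimul
    (hnorm : ∀ g : G, α g 1 = 1 ∧ α 1 g = 1)
    (hcoc : ∀ g₁ g₂ g₃ : G, α g₁ (g₂ * g₃) * α g₂ g₃ = α (g₁ * g₂) g₃ * α g₁ g₂)
    (hstab : ∀ g x y : G, Θ g ((α x y : K)) = (α x y : K))
    (hα2 : ∀ x y : G, (α x y : K) ^ 2 = 1)
    (φ : K →+* K) (hφ : ∀ x : K, φ x = x ^ q)
    (hq2 : ∀ x : K, (x ^ q) ^ q = x) (hq0 : q ≠ 0)
    (hαq : ∀ x y : G, (α x y : K) ^ q = α x y)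
    (a b : G → K) :
    adjq Θ α q (tsMul Θ α a b) = tsMul Θ α (adjq Θ α q b) (adjq Θ α q a) := by
  have key : ∀ r : G → K, herm q r (adjq Θ α q (tsMul Θ α a b))
      = herm q r (tsMul Θ α (adjq Θ α q b) (adjq Θ α q a)) := by
    intro r
    have h1 : herm q (tsMul Θ α r (tsMul Θ α a b)) tsOne
        = herm q r (adjq Θ α q (tsMul Θ α a b)) := by
      rw [herm_adj Θ α q hnorm hcoc hstab hα2 φ hφ hq2 hαq,
        one_tsMul Θ α hnorm]
    have h2 : herm q (tsMul Θ α (tsMul Θ α r a) b) tsOne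
        = herm q (tsMul Θ α r a) (adjq Θ α q b) := by
      rw [herm_adj Θ α q hnorm hcoc hstab hα2 φ hφ hq2 hαq,
        one_tsMul Θ α hnorm]
    have h3 : herm q (tsMul Θ α (tsMul Θ α r a) b) tsOne
        = herm q (tsMul Θ α r (tsMul Θ α a b)) tsOne := by
      rw [tsMul_assoc Θ α hcoc hstab]
    have h4 : herm q (tsMul Θ α r a) (adjq Θ α q b)
        = herm q r (tsMul Θ α (adjq Θ α q b) (adjq Θ α q a)) :=
      herm_adj Θ α q hnorm hcoc hstab hα2 φ hφ hq2 hαq r a (adjq Θ α q b)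
    rw [← h1, ← h3, h2, h4]
  have : ∀ r : G → K, herm q r
      (adjq Θ α q (tsMul Θ α a b) - tsMul Θ α (adjq Θ α q b) (adjq Θ α q a)) = 0 := by
    intro r
    rw [herm_sub_right q φ hφ, key r, sub_self]
  have hz := herm_nondeg_right q hq0 _ this
  exact sub_eq_zero.mp hz

end Aux

/-- Suppose `|K| = q²`, `α = α⁻¹`, and let `C` be a left ideal of
`R = K[G,Θ,α]`.  Then `C` is Hermitian LCD (`R = C ⊕ C^{⊥_h}`) iff `C = Re` for some
idempotent `e` with `e² = e` and `e` equal to the adjoint of `e^{(q)}`. -/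
theorem stmt17 [Field K] [Fintype K] [Group G] [Fintype G] [DecidableEq G]
    (q : ℕ) (hq : Fintype.card K = q ^ 2)
    (Θ : G →* RingAut K) (α : G → G → Kˣ)
    (hnorm : ∀ g : G, α g 1 = 1 ∧ α 1 g = 1)
    (hcoc : ∀ g₁ g₂ g₃ : G, α g₁ (g₂ * g₃) * α g₂ g₃ = α (g₁ * g₂) g₃ * α g₁ g₂)
    (hstab : ∀ g x y : G, Θ g ((α x y : K)) = (α x y : K))
    (hα2 : ∀ x y : G, (α x y : K) ^ 2 = 1)
    (C : Submodule K (G → K))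
    (hC : ∀ r : G → K, ∀ c ∈ C, tsMul Θ α r c ∈ C) :
    ((∀ x ∈ C, (∀ c ∈ C, ∑ g : G, c g * (x g) ^ q = 0) → x = 0) ∧
     (∀ x : G → K, ∃ c ∈ C, ∃ b : G → K,
        (∀ c' ∈ C, ∑ g : G, c' g * (b g) ^ q = 0) ∧ x = c + b)) ↔
      ∃ e : G → K, tsMul Θ α e e = e ∧ tsAdj Θ α (fun g => (e g) ^ q) = e ∧
        (C : Set (G → K)) = {x | ∃ r : G → K, x = tsMul Θ α r e} := by
  obtain ⟨⟨φ, hφ⟩, hq2, hq0, hpow⟩ := field_facts (K := K) q hq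
  have hαq : ∀ x y : G, (α x y : K) ^ q = α x y := fun x y => hpow _ (hα2 x y)
  have hadj := herm_adj Θ α q hnorm hcoc hstab hα2 φ hφ hq2 hαq
  have hinv := adjq_invol Θ α q hnorm hcoc hstab hα2 hq2 hαq
  have hanti := adjq_antimul Θ α q hnorm hcoc hstab hα2 φ hφ hq2 hq0 hαq
  constructor
  · rintro ⟨-, h2⟩
    obtain ⟨e, heC, f, hf, hef⟩ := h2 tsOne
    have hf' : ∀ c' ∈ C, herm q c' f = 0 := hf
    -- Step 1 : f · σ(c) = 0 for all c ∈ C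
    have step1 : ∀ c ∈ C, tsMul Θ α f (adjq Θ α q c) = 0 := by
      intro c hc
      refine herm_nondeg_left q hq0 _ fun r => ?_
      have : herm q (tsMul Θ α f (adjq Θ α q c)) r
          = herm q f (tsMul Θ α r (adjq Θ α q (adjq Θ α q c))) := hadj f (adjq Θ α q c) r
      rw [this, hinv c, herm_conj q φ hφ hq2,
        hf' (tsMul Θ α r c) (hC r c hc), zero_pow hq0]
    -- Step 2 : c · σ(f) = 0 for all c ∈ C
    have step2 : ∀ c ∈ C, tsMul Θ α c (adjq Θ α q f) = 0 := by
      intro c hc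
      have h := congrArg (adjq Θ α q) (step1 c hc)
      rw [hanti f (adjq Θ α q c), hinv c, adjq_zero Θ α q hq0] at h
      exact h
    -- Step 3 : 1 = σ(e) + σ(f)
    have step3 : (tsOne : G → K) = adjq Θ α q e + adjq Θ α q f := by
      have h := congrArg (adjq Θ α q) hef
      rwa [adjq_one Θ α q hnorm hq0, adjq_add Θ α q φ hφ] at h
    -- Step 4 : c = c·σ(e) for all c ∈ C
    have step4 : ∀ c ∈ C, c = tsMul Θ α c (adjq Θ α q e) := by
      intro c hc
      conv_lhs => rw [← tsMul_one Θ α hnorm c, step3]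
      rw [tsMul_add_right, step2 c hc, add_zero]
    have h5 : e = tsMul Θ α e (adjq Θ α q e) := step4 e heC
    have hσe : adjq Θ α q e = e := by
      have h := congrArg (adjq Θ α q) h5
      rw [hanti e (adjq Θ α q e), hinv e] at h
      rw [h, ← h5]
    refine ⟨e, ?_, hσe, ?_⟩
    · have := h5
      rwa [hσe, eq_comm] at this
    · ext x
      constructor
      · intro hx
        exact ⟨x, by rw [← hσe]; exact step4 x hx⟩
      · rintro ⟨r, rfl⟩
        exact hC r e heC
  · rintro ⟨e, hee, hse, hCe⟩
    have hσe : adjq Θ α q e = e := hse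
    have hmem : ∀ y : G → K, y ∈ C ↔ ∃ r : G → K, y = tsMul Θ α r e := fun y =>
      Set.ext_iff.mp hCe y
    constructor
    · intro x hx hperp
      obtain ⟨r₀, rfl⟩ := (hmem _).mp hx
      have hxe : tsMul Θ α (tsMul Θ α r₀ e) e = tsMul Θ α r₀ e := by
        rw [tsMul_assoc Θ α hcoc hstab, hee]
      refine herm_nondeg_right q hq0 _ fun r => ?_
      have h1 : herm q (tsMul Θ α r e) (tsMul Θ α r₀ e) = 0 :=
        hperp (tsMul Θ α r e) ((hmem _).mpr ⟨r, rfl⟩)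
      rw [hadj r e (tsMul Θ α r₀ e), hσe, hxe] at h1
      exact h1
    · intro x
      refine ⟨tsMul Θ α x e, (hmem _).mpr ⟨x, rfl⟩, x - tsMul Θ α x e, ?_, by abel⟩
      intro c' hc'
      obtain ⟨r, rfl⟩ := (hmem _).mp hc'
      have hbe : tsMul Θ α (x - tsMul Θ α x e) e = 0 := by
        rw [tsMul_sub_left, tsMul_assoc Θ α hcoc hstab, hee, sub_self]
      have : herm q (tsMul Θ α r e) (x - tsMul Θ α x e)
          = herm q r (tsMul Θ α (x - tsMul Θ α x e) (adjq Θ α q e)) := hadj _ _ _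
      rw [hσe, hbe] at this
      rw [show (∑ g : G, tsMul Θ α r e g * (x - tsMul Θ α x e) g ^ q)
          = herm q (tsMul Θ α r e) (x - tsMul Θ α x e) from rfl, this]
      exact herm_zero_right q hq0 r
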